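/- Let G be a simple graph on n vertices with maximum degree d_max, A₁ a symmetric matrix supported on edges of G with zero diagonal, D₁ the diagonal matrix of row sums of A₁, and L₁ = D₁ − A₁. Let Δx ∈ ℝ^m be the vector of edge entries (Δa_e)_{e∈E}. Then 2‖Δx‖₂² ≤ ‖L₁‖_F² ≤ 2(d_max + 1)‖Δx‖₂². -/

import Mathlib

open Matrix Finset

lemma dart_sum {n : ℕ} (G : SimpleGraph (Fin n)) [DecidableRel G.Adj]
    (f : Sym2 (Fin n) → ℝ) :
    ∑ d : G.Dart, f d.edge = 2 * ∑ e ∈ G.edgeFinset, f e := by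
  classical
  rw [← Finset.sum_fiberwise_of_maps_to (g := SimpleGraph.Dart.edge)
    (fun d (_ : d ∈ Finset.univ) => SimpleGraph.mem_edgeFinset.mpr d.edge_mem)
    (fun d => f d.edge)]
  rw [Finset.mul_sum]
  refine Finset.sum_congr rfl fun e he => ?_
  have hval : ∑ d ∈ Finset.univ.filter (fun d : G.Dart => d.edge = e), f d.edge
      = ∑ _d ∈ Finset.univ.filter (fun d : G.Dart => d.edge = e), f e :=
    Finset.sum_congr rfl fun d hd => by rw [(Finset.mem_filter.mp hd).2]
  have hc : (Finset.univ.filter (fun d : G.Dart => d.edge = e)).card = 2 := by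
    have := G.dart_edge_fiber_card e (SimpleGraph.mem_edgeFinset.mp he)
    simpa [Finset.filter] using this
  rw [hval, Finset.sum_const, nsmul_eq_mul, hc]; norm_num

lemma pair_sum {n : ℕ} (G : SimpleGraph (Fin n)) [DecidableRel G.Adj]
    (f : Sym2 (Fin n) → ℝ) :
    ∑ d : G.Dart, f d.edge
      = ∑ p ∈ Finset.univ.filter (fun p : Fin n × Fin n => G.Adj p.1 p.2), f (Sym2.mk p.1 p.2) := by
  refine Finset.sum_bij' (fun d _ => d.toProd) (fun p hp => ⟨p, (Finset.mem_filter.mp hp).2⟩)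
    ?_ ?_ ?_ ?_ ?_ <;> simp [SimpleGraph.Dart.edge]

theorem stmt_11 {n : ℕ} (G : SimpleGraph (Fin n)) [DecidableRel G.Adj]
    (A₁ : Matrix (Fin n) (Fin n) ℝ)
    (hsym : ∀ i j, A₁ i j = A₁ j i)
    (hsupp : ∀ i j, ¬ G.Adj i j → A₁ i j = 0) :
    2 * (∑ e ∈ G.edgeFinset,
          Sym2.lift ⟨fun i j => (A₁ i j) ^ 2, fun i j => by dsimp only; rw [hsym i j]⟩ e)
        ≤ ((Matrix.diagonal (fun i => ∑ j, A₁ i j) - A₁)ᵀ *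
            (Matrix.diagonal (fun i => ∑ j, A₁ i j) - A₁)).trace ∧
      ((Matrix.diagonal (fun i => ∑ j, A₁ i j) - A₁)ᵀ *
          (Matrix.diagonal (fun i => ∑ j, A₁ i j) - A₁)).trace
        ≤ 2 * (((Finset.univ.sup (fun i => G.degree i) : ℕ) : ℝ) + 1) *
            ∑ e ∈ G.edgeFinset,
              Sym2.lift ⟨fun i j => (A₁ i j) ^ 2, fun i j => by dsimp only; rw [hsym i j]⟩ e := by
  classical
  set f : Sym2 (Fin n) → ℝ :=
    Sym2.lift ⟨fun i j => (A₁ i j) ^ 2, fun i j => by dsimp only; rw [hsym i j]⟩ with hf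
  have hdiag : ∀ i, A₁ i i = 0 := fun i => hsupp i i (G.irrefl)
  have key : 2 * ∑ e ∈ G.edgeFinset, f e = ∑ i, ∑ j, (A₁ i j) ^ 2 := by
    rw [← dart_sum G f, pair_sum G f]
    rw [Finset.sum_filter, ← Finset.sum_product']
    refine Finset.sum_congr rfl fun p _ => ?_
    obtain ⟨a, b⟩ := p
    by_cases h : G.Adj a b
    · simp [h, hf]
    · simp [h, hsupp _ _ h]
  set d : Fin n → ℝ := fun i => ∑ j, A₁ i j with hd
  have htr : ((Matrix.diagonal d - A₁)ᵀ * (Matrix.diagonal d - A₁)).trace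
      = (∑ i, (d i) ^ 2) + ∑ i, ∑ j, (A₁ i j) ^ 2 := by
    rw [Matrix.trace]
    simp only [Matrix.diag_apply, Matrix.mul_apply, Matrix.transpose_apply,
      Matrix.sub_apply, Matrix.diagonal_apply]
    rw [← Finset.sum_add_distrib]
    refine Finset.sum_congr rfl fun i _ => ?_
    rw [show (∑ j, ((if j = i then d j else 0) - A₁ j i) * ((if j = i then d j else 0) - A₁ j i))
        = ∑ j, ((if j = i then (d i)^2 - 2 * d i * A₁ j i else 0) + (A₁ j i)^2) from
      Finset.sum_congr rfl fun j _ => by by_cases h : j = i <;> simp [h] <;> ring]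
    rw [Finset.sum_add_distrib, Finset.sum_ite_eq' Finset.univ i
      (fun j => (d i)^2 - 2 * d i * A₁ j i)]
    simp [hdiag i]
    exact Finset.sum_congr rfl fun j _ => by rw [hsym]
  constructor
  · rw [key, htr]
    have : (0:ℝ) ≤ ∑ i, (d i)^2 := Finset.sum_nonneg fun i _ => sq_nonneg _
    linarith
  · rw [htr]
    set D : ℝ := ((Finset.univ.sup (fun i => G.degree i) : ℕ) : ℝ) with hD
    have hDnn : (0:ℝ) ≤ D := Nat.cast_nonneg _
    have hdeg : ∀ i, (d i)^2 ≤ D * ∑ j, (A₁ i j)^2 := by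
      intro i
      have hsub : d i = ∑ j ∈ G.neighborFinset i, A₁ i j := by
        rw [hd]
        refine (Finset.sum_subset (Finset.subset_univ _) ?_).symm
        intro j _ hj
        exact hsupp i j (by simpa using hj)
      have hcs : (d i)^2 ≤ (G.degree i : ℝ) * ∑ j ∈ G.neighborFinset i, (A₁ i j)^2 := by
        rw [hsub]
        have := sq_sum_le_card_mul_sum_sq (s := G.neighborFinset i) (f := fun j => A₁ i j)
        simpa [SimpleGraph.card_neighborFinset_eq_degree] using this
      have hle : (G.degree i : ℝ) ≤ D := by
        have : G.degree i ≤ Finset.univ.sup (fun i => G.degree i) :=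
          Finset.le_sup (f := fun i => G.degree i) (Finset.mem_univ i)
        rw [hD]; exact_mod_cast this
      calc (d i)^2 ≤ (G.degree i : ℝ) * ∑ j ∈ G.neighborFinset i, (A₁ i j)^2 := hcs
        _ ≤ D * ∑ j, (A₁ i j)^2 := by
            refine mul_le_mul hle ?_ (Finset.sum_nonneg fun j _ => sq_nonneg _) hDnn
            exact Finset.sum_le_sum_of_subset_of_nonneg (Finset.subset_univ _)
              (fun j _ _ => sq_nonneg _)
    have h1 : ∑ i, (d i)^2 ≤ D * ∑ i, ∑ j, (A₁ i j)^2 := by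
      rw [Finset.mul_sum]
      exact Finset.sum_le_sum fun i _ => hdeg i
    have h2 : 2 * (D + 1) * ∑ e ∈ G.edgeFinset, f e = (D + 1) * ∑ i, ∑ j, (A₁ i j)^2 := by
      rw [← key]; ring
    rw [h2]
    linarith
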